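/- Let p be a prime and f₀, f₂ : ℤ/pℤ → ℂ, K : (ℤ/pℤ)² → ℂ, and f₁ : ℤ/pℤ → ℂ. Then |∑_{n₁,n₂} f̂₀(-n₁-n₂) f̂₁(n₁) f̂₂(n₂) K(n₁,n₂)| ≤ ‖f₂‖₂ ‖f₁‖₂ · (∑_{n₁,m₁,n₂,m₂} f̂₀(-n₁-n₂) conj(f̂₀)(-m₁-n₂) conj(f̂₀)(-n₁-m₂) f̂₀(-m₁-m₂) K(n₁,n₂) conj(K)(m₁,n₂) conj(K)(n₁,m₂) K(m₁,m₂))^{1/4}, where in particular the quantity inside the fourth root is a nonnegative real number. -/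

import Mathlib

open Finset

noncomputable def ep (p : ℕ) (x : ZMod p) : ℂ :=
  Complex.exp (2 * Real.pi * Complex.I * x.val / p)

noncomputable def ft (p : ℕ) [NeZero p] (f : ZMod p → ℂ) (ξ : ZMod p) : ℂ :=
  (1 / p) * ∑ x : ZMod p, f x * ep p (-(x * ξ))

noncomputable def L2 (p : ℕ) [NeZero p] (f : ZMod p → ℂ) : ℝ :=
  Real.sqrt ((1 / p) * ∑ x : ZMod p, ‖f x‖ ^ 2)

set_option maxHeartbeats 2000000

lemma ep_eq_pow (p : ℕ) (x : ZMod p) :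
    ep p x = Complex.exp (2 * Real.pi * Complex.I / p) ^ x.val := by
  rw [ep, ← Complex.exp_nat_mul]
  congr 1
  ring

lemma ep_add (p : ℕ) [NeZero p] (a b : ZMod p) : ep p (a + b) = ep p a * ep p b := by
  have hζ := Complex.isPrimitiveRoot_exp p (NeZero.ne p)
  simp only [ep_eq_pow, ← pow_add]
  rw [ZMod.val_add]
  conv_rhs => rw [← Nat.mod_add_div (a.val + b.val) p]
  rw [pow_add, pow_mul, hζ.pow_eq_one, one_pow, mul_one]

lemma ep_zero (p : ℕ) [NeZero p] : ep p 0 = 1 := by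
  simp [ep, ZMod.val_zero]

lemma ep_mul_conj (p : ℕ) (x : ZMod p) : ep p x * (starRingEnd ℂ) (ep p x) = 1 := by
  rw [ep, ← Complex.exp_conj, ← Complex.exp_add]
  have : (starRingEnd ℂ) (2 * (Real.pi : ℂ) * Complex.I * (x.val : ℂ) / p)
      = -(2 * (Real.pi : ℂ) * Complex.I * (x.val : ℂ) / p) := by
    simp [map_div₀, Complex.conj_I, map_ofNat]
    ring
  rw [this, add_neg_cancel, Complex.exp_zero]

lemma ep_conj (p : ℕ) [NeZero p] (x : ZMod p) :
    (starRingEnd ℂ) (ep p x) = ep p (-x) := by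
  have h1 : ep p x * ep p (-x) = 1 := by rw [← ep_add]; simp [ep_zero]
  have h2 := ep_mul_conj p x
  have hne : ep p x ≠ 0 := left_ne_zero_of_mul_eq_one h1
  exact mul_left_cancel₀ hne (h2.trans h1.symm)

lemma ep_sum (p : ℕ) [Fact p.Prime] (x : ZMod p) :
    ∑ ξ : ZMod p, ep p (x * ξ) = if x = 0 then (p : ℂ) else 0 := by
  have hζ := Complex.isPrimitiveRoot_exp p (NeZero.ne p)
  by_cases hx : x = 0
  · simp [hx, ep_zero, Finset.card_univ, ZMod.card]
  · rw [if_neg hx]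
    have h1 : ∑ ξ : ZMod p, ep p (x * ξ) = ∑ ξ : ZMod p, ep p ξ :=
      Fintype.sum_bijective (x * ·) (mulLeft_bijective₀ x hx) _ _ (fun ξ => rfl)
    have h2 : ∑ ξ : ZMod p, ep p ξ = ∑ i ∈ range p, Complex.exp (2 * Real.pi * Complex.I / p) ^ i := by
      simp only [ep_eq_pow]
      refine Finset.sum_bij' (fun ξ _ => ξ.val) (fun i _ => (i : ZMod p)) ?_ ?_ ?_ ?_ ?_
      · intro ξ _; exact Finset.mem_range.2 (ZMod.val_lt ξ)
      · intro i _; exact Finset.mem_univ _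
      · intro ξ _; exact ZMod.natCast_rightInverse ξ
      · intro i hi; exact ZMod.val_cast_of_lt (Finset.mem_range.1 hi)
      · intro ξ _; rfl
    rw [h1, h2, hζ.geom_sum_eq_zero (Fact.out : p.Prime).one_lt]

lemma parseval (p : ℕ) [Fact p.Prime] (f : ZMod p → ℂ) :
    ∑ ξ : ZMod p, ‖ft p f ξ‖ ^ 2 = (1 / p) * ∑ x : ZMod p, ‖f x‖ ^ 2 := by
  have hp : (p : ℂ) ≠ 0 := Nat.cast_ne_zero.2 (NeZero.ne p)
  have key : ∑ ξ : ZMod p, ft p f ξ * (starRingEnd ℂ) (ft p f ξ)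
      = (1 / p) * ∑ x : ZMod p, f x * (starRingEnd ℂ) (f x) := by
    have step1 : ∀ ξ : ZMod p, ft p f ξ * (starRingEnd ℂ) (ft p f ξ)
        = (1 / p) * (1 / p) * ∑ x : ZMod p, ∑ y : ZMod p,
            f x * (starRingEnd ℂ) (f y) * ep p ((y - x) * ξ) := by
      intro ξ
      rw [ft, map_mul, map_sum]
      have : ∀ y : ZMod p, (starRingEnd ℂ) (f y * ep p (-(y * ξ)))
          = (starRingEnd ℂ) (f y) * ep p (y * ξ) := by
        intro y; rw [map_mul, ep_conj, neg_neg]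
      simp only [this, map_div₀, map_one, Complex.conj_natCast]
      rw [mul_mul_mul_comm, Finset.sum_mul_sum]
      congr 1
      refine Finset.sum_congr rfl fun x _ => Finset.sum_congr rfl fun y _ => ?_
      rw [mul_mul_mul_comm, ← ep_add]
      congr 2
      ring
    calc ∑ ξ : ZMod p, ft p f ξ * (starRingEnd ℂ) (ft p f ξ)
        = ∑ ξ : ZMod p, (1 / p) * (1 / p) * ∑ x : ZMod p, ∑ y : ZMod p,
            f x * (starRingEnd ℂ) (f y) * ep p ((y - x) * ξ) :=
          Finset.sum_congr rfl fun ξ _ => step1 ξ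
      _ = (1 / p) * (1 / p) * ∑ x : ZMod p, ∑ y : ZMod p,
            f x * (starRingEnd ℂ) (f y) * ∑ ξ : ZMod p, ep p ((y - x) * ξ) := by
          rw [← Finset.mul_sum]
          congr 1
          rw [Finset.sum_comm]
          refine Finset.sum_congr rfl fun x _ => ?_
          rw [Finset.sum_comm]
          refine Finset.sum_congr rfl fun y _ => ?_
          rw [Finset.mul_sum]
      _ = (1 / p) * (1 / p) * ∑ x : ZMod p, f x * (starRingEnd ℂ) (f x) * p := by
          congr 1
          refine Finset.sum_congr rfl fun x _ => ?_
          rw [Finset.sum_eq_single x]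
          · rw [ep_sum, if_pos (by ring)]
          · intro y _ hyx
            rw [ep_sum, if_neg (by simpa [sub_eq_zero] using hyx), mul_zero]
          · intro h; exact absurd (Finset.mem_univ x) h
      _ = (1 / p) * ∑ x : ZMod p, f x * (starRingEnd ℂ) (f x) := by
          rw [← Finset.sum_mul]
          field_simp
  have lhs : ∑ ξ : ZMod p, ft p f ξ * (starRingEnd ℂ) (ft p f ξ)
      = ((∑ ξ : ZMod p, ‖ft p f ξ‖ ^ 2 : ℝ) : ℂ) := by
    push_cast
    exact Finset.sum_congr rfl fun ξ _ => by
      rw [Complex.mul_conj, ← Complex.sq_norm]; push_cast; ring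
  have rhs : (1 / (p : ℂ)) * ∑ x : ZMod p, f x * (starRingEnd ℂ) (f x)
      = (((1 / p) * ∑ x : ZMod p, ‖f x‖ ^ 2 : ℝ) : ℂ) := by
    push_cast
    congr 1
    exact Finset.sum_congr rfl fun x _ => by
      rw [Complex.mul_conj, ← Complex.sq_norm]; push_cast; ring
  have := lhs.symm.trans (key.trans rhs)
  exact_mod_cast this

noncomputable def Aaux (p : ℕ) [NeZero p] (f₀ f₁ : ZMod p → ℂ) (K : ZMod p → ZMod p → ℂ)
    (n₂ : ZMod p) : ℂ :=
  ∑ n₁ : ZMod p, ft p f₀ (-n₁ - n₂) * ft p f₁ n₁ * K n₁ n₂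

noncomputable def Baux (p : ℕ) [NeZero p] (f₀ : ZMod p → ℂ) (K : ZMod p → ZMod p → ℂ)
    (n₁ m₁ : ZMod p) : ℂ :=
  ∑ n₂ : ZMod p, ft p f₀ (-n₁ - n₂) * (starRingEnd ℂ) (ft p f₀ (-m₁ - n₂)) *
    (K n₁ n₂ * (starRingEnd ℂ) (K m₁ n₂))

theorem double_cauchy_schwarz (p : ℕ) [Fact p.Prime]
    (f₀ f₁ f₂ : ZMod p → ℂ) (K : ZMod p → ZMod p → ℂ)
    (T : ℂ)
    (hT : T = ∑ n₁ : ZMod p, ∑ m₁ : ZMod p, ∑ n₂ : ZMod p, ∑ m₂ : ZMod p,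
      ft p f₀ (-n₁ - n₂) * (starRingEnd ℂ) (ft p f₀ (-m₁ - n₂)) *
        (starRingEnd ℂ) (ft p f₀ (-n₁ - m₂)) * ft p f₀ (-m₁ - m₂) *
        (K n₁ n₂ * (starRingEnd ℂ) (K m₁ n₂) * (starRingEnd ℂ) (K n₁ m₂) * K m₁ m₂)) :
    T.im = 0 ∧ 0 ≤ T.re ∧
      ‖∑ n₁ : ZMod p, ∑ n₂ : ZMod p,
          ft p f₀ (-n₁ - n₂) * ft p f₁ n₁ * ft p f₂ n₂ * K n₁ n₂‖ ≤
        L2 p f₂ * L2 p f₁ * T.re ^ ((1 : ℝ) / 4) := by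
  classical
  set a := ft p f₀ with ha
  set b := ft p f₁ with hbb
  set c := ft p f₂ with hcc
  set A := Aaux p f₀ f₁ K with hA
  set B := Baux p f₀ K with hB
  -- T is the sum of |B|²
  have hT2 : T = ((∑ n₁ : ZMod p, ∑ m₁ : ZMod p, ‖B n₁ m₁‖ ^ 2 : ℝ) : ℂ) := by
    rw [hT]
    push_cast
    refine Finset.sum_congr rfl fun n₁ _ => Finset.sum_congr rfl fun m₁ _ => ?_
    have h1 : ((‖B n₁ m₁‖ : ℂ)) ^ 2 = B n₁ m₁ * (starRingEnd ℂ) (B n₁ m₁) := by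
      rw [Complex.mul_conj, ← Complex.sq_norm]; push_cast; ring
    rw [h1, hB]
    simp only [Baux, map_sum, map_mul, Finset.sum_mul, Finset.mul_sum, ← ha,
      Complex.conj_conj]
    rw [Finset.sum_comm]
    refine Finset.sum_congr rfl fun n₂ _ => Finset.sum_congr rfl fun m₂ _ => ?_
    ring
  have him : T.im = 0 := by rw [hT2]; exact Complex.ofReal_im _
  have hre : T.re = ∑ n₁ : ZMod p, ∑ m₁ : ZMod p, ‖B n₁ m₁‖ ^ 2 := by
    rw [hT2]; exact Complex.ofReal_re _
  have hre_nonneg : 0 ≤ T.re := by rw [hre]; positivity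
  refine ⟨him, hre_nonneg, ?_⟩
  -- second Cauchy-Schwarz: ∑ |A|² ≤ (∑ |b|²) * √T.re
  have sumA_eq : ((∑ n₂ : ZMod p, ‖A n₂‖ ^ 2 : ℝ) : ℂ)
      = ∑ n₁ : ZMod p, ∑ m₁ : ZMod p, (b n₁ * (starRingEnd ℂ) (b m₁)) * B n₁ m₁ := by
    push_cast
    have h1 : ∀ n₂ : ZMod p, ((‖A n₂‖ : ℂ)) ^ 2
        = A n₂ * (starRingEnd ℂ) (A n₂) := fun n₂ => by
      rw [Complex.mul_conj, ← Complex.sq_norm]; push_cast; ring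
    calc ∑ n₂ : ZMod p, ((‖A n₂‖ : ℂ)) ^ 2
        = ∑ n₂ : ZMod p, ∑ n₁ : ZMod p, ∑ m₁ : ZMod p,
            (a (-n₁ - n₂) * b n₁ * K n₁ n₂) *
              ((starRingEnd ℂ) (a (-m₁ - n₂)) * (starRingEnd ℂ) (b m₁) *
                (starRingEnd ℂ) (K m₁ n₂)) := by
          refine Finset.sum_congr rfl fun n₂ _ => ?_
          rw [h1, hA]
          simp only [Aaux, map_sum, map_mul, Finset.sum_mul, Finset.mul_sum, ← ha, ← hbb]
          rw [Finset.sum_comm]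
      _ = ∑ n₁ : ZMod p, ∑ m₁ : ZMod p, (b n₁ * (starRingEnd ℂ) (b m₁)) * B n₁ m₁ := by
          rw [Finset.sum_comm]
          refine Finset.sum_congr rfl fun n₁ _ => ?_
          rw [Finset.sum_comm]
          refine Finset.sum_congr rfl fun m₁ _ => ?_
          rw [hB]
          simp only [Baux, Finset.mul_sum, ← ha]
          refine Finset.sum_congr rfl fun n₂ _ => ?_
          ring
  have key2 : ∑ n₂ : ZMod p, ‖A n₂‖ ^ 2
      ≤ (∑ ξ : ZMod p, ‖b ξ‖ ^ 2) * Real.sqrt T.re := by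
    have e2 : ∑ n₂ : ZMod p, ‖A n₂‖ ^ 2
        = ‖∑ n₁ : ZMod p, ∑ m₁ : ZMod p,
            (b n₁ * (starRingEnd ℂ) (b m₁)) * B n₁ m₁‖ := by
      rw [← sumA_eq, Complex.norm_real, Real.norm_eq_abs, abs_of_nonneg (by positivity)]
    rw [e2]
    have cs := Real.sum_mul_le_sqrt_mul_sqrt (Finset.univ : Finset (ZMod p × ZMod p))
      (fun q => ‖b q.1‖ * ‖b q.2‖)
      (fun q => ‖B q.1 q.2‖)
    rw [Fintype.sum_prod_type, Fintype.sum_prod_type, Fintype.sum_prod_type] at cs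
    dsimp only at cs
    calc ‖∑ n₁ : ZMod p, ∑ m₁ : ZMod p, (b n₁ * (starRingEnd ℂ) (b m₁)) * B n₁ m₁‖
        ≤ ∑ n₁ : ZMod p, ∑ m₁ : ZMod p,
            ‖b n₁‖ * ‖b m₁‖ * ‖B n₁ m₁‖ := by
          refine (norm_sum_le _ _).trans (Finset.sum_le_sum fun n₁ _ => ?_)
          refine (norm_sum_le _ _).trans (le_of_eq ?_)
          refine Finset.sum_congr rfl fun m₁ _ => ?_
          simp [map_mul, Complex.norm_conj]
      _ ≤ Real.sqrt (∑ n₁ : ZMod p, ∑ m₁ : ZMod p,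
            (‖b n₁‖ * ‖b m₁‖) ^ 2) *
          Real.sqrt (∑ n₁ : ZMod p, ∑ m₁ : ZMod p, ‖B n₁ m₁‖ ^ 2) := cs
      _ = (∑ ξ : ZMod p, ‖b ξ‖ ^ 2) * Real.sqrt T.re := by
          rw [← hre]
          congr 1
          have h3 : ∑ n₁ : ZMod p, ∑ m₁ : ZMod p, (‖b n₁‖ * ‖b m₁‖) ^ 2
              = (∑ ξ : ZMod p, ‖b ξ‖ ^ 2) ^ 2 := by
            calc ∑ n₁ : ZMod p, ∑ m₁ : ZMod p, (‖b n₁‖ * ‖b m₁‖) ^ 2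
                = ∑ n₁ : ZMod p, ∑ m₁ : ZMod p,
                    ‖b n₁‖ ^ 2 * ‖b m₁‖ ^ 2 := by
                  simp [mul_pow]
              _ = (∑ ξ : ZMod p, ‖b ξ‖ ^ 2) * (∑ ξ : ZMod p, ‖b ξ‖ ^ 2) :=
                  (Finset.sum_mul_sum _ _ _ _).symm
              _ = (∑ ξ : ZMod p, ‖b ξ‖ ^ 2) ^ 2 := (sq _).symm
          rw [h3, Real.sqrt_sq (by positivity)]
  -- first Cauchy-Schwarz
  have hS : (∑ n₁ : ZMod p, ∑ n₂ : ZMod p, a (-n₁ - n₂) * b n₁ * c n₂ * K n₁ n₂)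
      = ∑ n₂ : ZMod p, c n₂ * A n₂ := by
    rw [Finset.sum_comm]
    refine Finset.sum_congr rfl fun n₂ _ => ?_
    rw [hA]
    simp only [Aaux, Finset.mul_sum, ← ha, ← hbb]
    refine Finset.sum_congr rfl fun n₁ _ => ?_
    ring
  rw [hS]
  have cs1 := Real.sum_mul_le_sqrt_mul_sqrt (Finset.univ : Finset (ZMod p))
    (fun n₂ => ‖c n₂‖) (fun n₂ => ‖A n₂‖)
  have step1 : ‖∑ n₂ : ZMod p, c n₂ * A n₂‖
      ≤ Real.sqrt (∑ n₂ : ZMod p, ‖c n₂‖ ^ 2) *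
        Real.sqrt (∑ n₂ : ZMod p, ‖A n₂‖ ^ 2) := by
    refine le_trans ?_ cs1
    refine (norm_sum_le _ _).trans (le_of_eq ?_)
    exact Finset.sum_congr rfl fun n₂ _ => norm_mul _ _
  have hPc : Real.sqrt (∑ n₂ : ZMod p, ‖c n₂‖ ^ 2) = L2 p f₂ := by
    rw [L2, ← parseval p f₂]
  have hPb : Real.sqrt (∑ ξ : ZMod p, ‖b ξ‖ ^ 2) = L2 p f₁ := by
    rw [L2, ← parseval p f₁]
  have hquarter : Real.sqrt (Real.sqrt T.re) = T.re ^ ((1 : ℝ) / 4) := by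
    rw [Real.sqrt_eq_rpow, Real.sqrt_eq_rpow, ← Real.rpow_mul hre_nonneg]
    norm_num
  have step2 : Real.sqrt (∑ n₂ : ZMod p, ‖A n₂‖ ^ 2)
      ≤ L2 p f₁ * T.re ^ ((1 : ℝ) / 4) := by
    refine le_trans (Real.sqrt_le_sqrt key2) (le_of_eq ?_)
    rw [Real.sqrt_mul (by positivity), hPb, hquarter]
  calc ‖∑ n₂ : ZMod p, c n₂ * A n₂‖
      ≤ Real.sqrt (∑ n₂ : ZMod p, ‖c n₂‖ ^ 2) *
        Real.sqrt (∑ n₂ : ZMod p, ‖A n₂‖ ^ 2) := step1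
    _ ≤ L2 p f₂ * (L2 p f₁ * T.re ^ ((1 : ℝ) / 4)) := by
        rw [hPc]
        exact mul_le_mul_of_nonneg_left step2 (Real.sqrt_nonneg _)
    _ = L2 p f₂ * L2 p f₁ * T.re ^ ((1 : ℝ) / 4) := by ring
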